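/- If P is a symmetric positive definite solution of the algebraic Riccati equation AᵀP + PA - PBR⁻¹BᵀP + Q = 0 with Q positive definite and R positive definite, then every eigenvalue λ of A - BR⁻¹BᵀP has strictly negative real part. -/

import Mathlib

open Matrix ComplexOrder

lemma mapC_mul {k l r : ℕ} (X : Matrix (Fin k) (Fin l) ℝ) (Y : Matrix (Fin l) (Fin r) ℝ) :
    (X * Y).map Complex.ofReal = X.map Complex.ofReal * Y.map Complex.ofReal :=
  Matrix.map_mul (f := Complex.ofRealHom)

lemma mapC_add {k l : ℕ} (X Y : Matrix (Fin k) (Fin l) ℝ) :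
    (X + Y).map Complex.ofReal = X.map Complex.ofReal + Y.map Complex.ofReal :=
  Matrix.map_add _ Complex.ofReal_add _ _

/-- Complexification of a real positive definite matrix is positive definite. -/
lemma posDef_map_ofReal {n : ℕ} {P : Matrix (Fin n) (Fin n) ℝ} (hP : P.PosDef) :
    (P.map Complex.ofReal).PosDef := by
  have hsym : ∀ i j, P j i = P i j := by
    intro i j
    have := congrFun (congrFun hP.1 i) j
    simpa [conjTranspose_apply] using this
  refine posDef_iff_dotProduct_mulVec.mpr ⟨?_, ?_⟩
  · ext i j
    simp [conjTranspose_apply, map_apply, hsym i j]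
  · intro x hx
    set c : ℂ := star x ⬝ᵥ (P.map Complex.ofReal) *ᵥ x with hc
    have him : c.im = 0 := by
      have hstar : (starRingEnd ℂ) c = c := by
        have h1 : star c = star (P.map Complex.ofReal *ᵥ x) ⬝ᵥ star (star x) := by
          rw [hc, star_dotProduct_star]
        rw [star_star] at h1
        rw [star_mulVec] at h1
        have hherm : (P.map Complex.ofReal)ᴴ = P.map Complex.ofReal := by
          ext i j
          simp [conjTranspose_apply, map_apply, hsym i j]
        rw [hherm] at h1
        have h2 : (star x ᵥ* P.map Complex.ofReal) ⬝ᵥ x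
            = star x ⬝ᵥ (P.map Complex.ofReal) *ᵥ x := (dotProduct_mulVec _ _ _).symm
        calc (starRingEnd ℂ) c = star c := rfl
          _ = star x ᵥ* P.map Complex.ofReal ⬝ᵥ x := h1
          _ = c := by rw [h2, hc]
      exact Complex.conj_eq_iff_im.mp hstar
    have hre : c.re = (fun i => (x i).re) ⬝ᵥ P *ᵥ (fun i => (x i).re)
        + (fun i => (x i).im) ⬝ᵥ P *ᵥ (fun i => (x i).im) := by
      simp only [hc, dotProduct, mulVec, map_apply, Pi.star_apply, Finset.mul_sum,
        Complex.re_sum, Complex.mul_re, Complex.ofReal_re, Complex.ofReal_im,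
        RCLike.star_def, Complex.conj_re, Complex.conj_im, Finset.sum_add_distrib,
        Finset.mul_sum]
      rw [← Finset.sum_add_distrib]
      apply Finset.sum_congr rfl
      intro i _
      rw [← Finset.sum_add_distrib]
      apply Finset.sum_congr rfl
      intro j _
      simp only [Complex.mul_im, Complex.mul_re, Complex.ofReal_re, Complex.ofReal_im]
      ring
    have hab : (fun i => (x i).re) ≠ 0 ∨ (fun i => (x i).im) ≠ 0 := by
      by_contra h
      push_neg at h
      apply hx
      funext i
      have h1 := congrFun h.1 i
      have h2 := congrFun h.2 i
      simp only [Pi.zero_apply] at h1 h2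
      exact Complex.ext h1 h2
    have hposre : 0 < c.re := by
      rcases hab with ha | hb
      · have h1 : 0 < (fun i => (x i).re) ⬝ᵥ P *ᵥ (fun i => (x i).re) := by
          simpa using hP.dotProduct_mulVec_pos ha
        have h2 : 0 ≤ (fun i => (x i).im) ⬝ᵥ P *ᵥ (fun i => (x i).im) := by
          simpa using hP.posSemidef.dotProduct_mulVec_nonneg (fun i => (x i).im)
        rw [hre]; linarith
      · have h1 : 0 < (fun i => (x i).im) ⬝ᵥ P *ᵥ (fun i => (x i).im) := by
          simpa using hP.dotProduct_mulVec_pos hb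
        have h2 : 0 ≤ (fun i => (x i).re) ⬝ᵥ P *ᵥ (fun i => (x i).re) := by
          simpa using hP.posSemidef.dotProduct_mulVec_nonneg (fun i => (x i).re)
        rw [hre]; linarith
    rw [Complex.lt_def]
    exact ⟨by simpa using hposre, by simp [him]⟩

theorem riccati_solution_stabilizing {n m : ℕ}
    (A : Matrix (Fin n) (Fin n) ℝ) (B : Matrix (Fin n) (Fin m) ℝ)
    (Q P : Matrix (Fin n) (Fin n) ℝ) (R : Matrix (Fin m) (Fin m) ℝ)
    (hQ : Q.PosDef) (hR : R.PosDef) (hP : P.PosDef)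
    (hRiccati : Aᵀ * P + P * A - P * B * R⁻¹ * Bᵀ * P + Q = 0) :
    ∀ μ : ℂ, μ ∈ spectrum ℂ ((A - B * R⁻¹ * Bᵀ * P).map Complex.ofReal) → μ.re < 0 := by
  intro μ hμ
  set Acl : Matrix (Fin n) (Fin n) ℝ := A - B * R⁻¹ * Bᵀ * P with hAcldef
  -- symmetry facts
  have hPsym : Pᵀ = P := by
    rw [← conjTranspose_eq_transpose_of_trivial]; exact hP.1
  have hRsym : Rᵀ = R := by
    rw [← conjTranspose_eq_transpose_of_trivial]; exact hR.1
  have hRinvSym : (R⁻¹)ᵀ = R⁻¹ := by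
    rw [transpose_nonsing_inv, hRsym]
  -- transpose of Acl
  have hAclT : Aclᵀ = Aᵀ - P * B * R⁻¹ * Bᵀ := by
    rw [hAcldef]
    simp only [transpose_sub, transpose_mul, transpose_transpose, hPsym, hRinvSym]
    simp [Matrix.mul_assoc]
  -- Lyapunov identity
  have hAP : Aᵀ * P + P * A = P * B * R⁻¹ * Bᵀ * P - Q := by
    have h := hRiccati
    rw [sub_add_eq_add_sub] at h
    have := sub_eq_zero.mp h
    rw [← this]; abel
  have hLyap : Aclᵀ * P + P * Acl = -(Q + P * (B * R⁻¹ * Bᵀ) * P) := by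
    rw [hAclT, hAcldef]
    have expand : (Aᵀ - P * B * R⁻¹ * Bᵀ) * P + P * (A - B * R⁻¹ * Bᵀ * P)
        = (Aᵀ * P + P * A) - P * B * R⁻¹ * Bᵀ * P - P * B * R⁻¹ * Bᵀ * P := by
      simp only [Matrix.sub_mul, Matrix.mul_sub, Matrix.mul_assoc]
      abel
    rw [expand, hAP]
    simp only [Matrix.mul_assoc]
    abel
  -- positive definiteness of Q + P (B R⁻¹ Bᵀ) P
  have hBRB : (B * R⁻¹ * Bᵀ).PosSemidef := by
    have := hR.posSemidef.inv.mul_mul_conjTranspose_same B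
    rwa [conjTranspose_eq_transpose_of_trivial] at this
  have hS : (P * (B * R⁻¹ * Bᵀ) * P).PosSemidef := by
    have := hBRB.mul_mul_conjTranspose_same P
    rwa [hP.1] at this
  have hM : (Q + P * (B * R⁻¹ * Bᵀ) * P).PosDef := hQ.add_posSemidef hS
  -- eigenvector
  rw [spectrum.mem_iff] at hμ
  have hdet : ((algebraMap ℂ (Matrix (Fin n) (Fin n) ℂ)) μ - Acl.map Complex.ofReal).det = 0 := by
    by_contra h
    exact hμ ((Matrix.isUnit_iff_isUnit_det _).2 (isUnit_iff_ne_zero.2 h))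
  obtain ⟨v, hv0, hv⟩ := (Matrix.exists_mulVec_eq_zero_iff).2 hdet
  have heig : (Acl.map Complex.ofReal) *ᵥ v = μ • v := by
    have h1 : (algebraMap ℂ (Matrix (Fin n) (Fin n) ℂ)) μ = μ • (1 : Matrix (Fin n) (Fin n) ℂ) :=
      Algebra.algebraMap_eq_smul_one μ
    rw [h1, sub_mulVec, smul_mulVec, one_mulVec] at hv
    exact (sub_eq_zero.mp hv).symm
  -- complexified matrices
  set PC := P.map Complex.ofReal with hPC
  set AclC := Acl.map Complex.ofReal with hAclC
  set MC := (Q + P * (B * R⁻¹ * Bᵀ) * P).map Complex.ofReal with hMC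
  have hLyap2 : Aclᵀ * P + P * Acl + (Q + P * (B * R⁻¹ * Bᵀ) * P) = 0 := by
    rw [hLyap]; abel
  have hmapLyap : (Aclᵀ.map Complex.ofReal) * PC + PC * AclC + MC = 0 := by
    rw [hPC, hAclC, hMC, ← mapC_mul, ← mapC_mul, ← mapC_add, ← mapC_add, hLyap2]
    ext i j
    simp
  -- hermitian relation
  have hAclH : AclCᴴ = Aclᵀ.map Complex.ofReal := by
    ext i j
    simp [hAclC, conjTranspose_apply, map_apply]
  -- apply to v
  set c : ℂ := star v ⬝ᵥ PC *ᵥ v with hcdef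
  have key : ((starRingEnd ℂ) μ + μ) * c + star v ⬝ᵥ MC *ᵥ v = 0 := by
    have happ := congrArg (fun M : Matrix (Fin n) (Fin n) ℂ => star v ⬝ᵥ M *ᵥ v) hmapLyap
    simp only [add_mulVec, dotProduct_add, zero_mulVec, dotProduct_zero] at happ
    have term1 : star v ⬝ᵥ (Aclᵀ.map Complex.ofReal * PC) *ᵥ v = (starRingEnd ℂ) μ * c := by
      rw [← Matrix.mulVec_mulVec, dotProduct_mulVec, ← hAclH, ← star_mulVec, heig]
      rw [star_smul, smul_dotProduct, hcdef]
      simp [dotProduct_mulVec]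
    have term2 : star v ⬝ᵥ (PC * AclC) *ᵥ v = μ * c := by
      rw [← Matrix.mulVec_mulVec, heig, mulVec_smul, dotProduct_smul, hcdef, smul_eq_mul]
    rw [term1, term2] at happ
    rw [add_mul]
    exact happ
  -- take real parts
  have hcre : 0 < c.re := by
    have := (posDef_map_ofReal hP).dotProduct_mulVec_pos hv0
    rw [Complex.lt_def] at this
    simpa [hcdef, hPC] using this.1
  have hdre : 0 < (star v ⬝ᵥ MC *ᵥ v).re := by
    have := (posDef_map_ofReal hM).dotProduct_mulVec_pos hv0
    rw [Complex.lt_def] at this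
    simpa [hMC] using this.1
  have hre := congrArg Complex.re key
  have hconj : (starRingEnd ℂ) μ + μ = ((2 * μ.re : ℝ) : ℂ) := by
    rw [add_comm]; exact Complex.add_conj μ
  rw [hconj] at hre
  rw [Complex.add_re, Complex.zero_re, Complex.re_ofReal_mul] at hre
  nlinarith [hcre, hdre, hre]
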